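/- In the low temperature regime with parameters k and c (k, c > 0), there exists a constant C₃ > 0 such that for every a with 0 < a < 8k − 4 there is L₀ with: for all L ≥ L₀, P(T ≤ L^{8k−4−a}) ≤ C₃ L^{−a}, where T is the first time at which at least two distinct sites simultaneously have atypical uniform numbers. -/

import Mathlib

open Real Filter MeasureTheory ProbabilityTheory

noncomputable section

/-- A site of the 2d discrete torus `(ℤ/Lℤ)²`. -/
abbrev Site (L : ℕ) := ZMod L × ZMod L

/-- `ε_L = e^{−2J+q}/(2 cosh(2J−q))` with `J = k log L`, `q = c (log L)/L`. -/
def epsL (L : ℕ) (k c : ℝ) : ℝ :=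
  Real.exp (-(2 * (k * Real.log L)) + c * Real.log L / L) /
    (2 * Real.cosh (2 * (k * Real.log L) - c * Real.log L / L))

/-- The uniform number `U_x(n)` is *typical* if it lies in `(ε_L, 1 − ε_L)`. -/
def typical (L : ℕ) (k c : ℝ) (u : ℝ) : Prop :=
  u ∈ Set.Ioo (epsL L k c) (1 - epsL L k c)

lemma epsL_pos (L : ℕ) (k c : ℝ) (hL : 2 ≤ L) : 0 < epsL L k c := by
  have : (0:ℝ) < 2 * Real.cosh (2 * (k * Real.log L) - c * Real.log L / L) := by
    positivity
  exact div_pos (Real.exp_pos _) this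

lemma epsL_le (L : ℕ) (k c : ℝ) (hL : 2 ≤ L)
    (hq : 2 * (c * Real.log L / L) ≤ 1) :
    epsL L k c ≤ Real.exp 1 * (L : ℝ) ^ (-(4*k)) := by
  have hLpos : (0:ℝ) < L := by positivity
  set A : ℝ := -(2 * (k * Real.log L)) + c * Real.log L / L with hA
  set t : ℝ := 2 * (k * Real.log L) - c * Real.log L / L with ht
  have hcosh : Real.exp t ≤ 2 * Real.cosh t := by
    have h1 := Real.exp_pos (-t)
    rw [Real.cosh_eq]; linarith
  have h1 : epsL L k c ≤ Real.exp A / Real.exp t := by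
    rw [epsL]
    exact div_le_div_of_nonneg_left (Real.exp_pos _).le (Real.exp_pos _) hcosh
  have h2 : Real.exp A / Real.exp t
      = Real.exp (2 * (c * Real.log L / L)) * Real.exp (Real.log L * (-(4*k))) := by
    rw [← Real.exp_sub, ← Real.exp_add]
    congr 1
    rw [hA, ht]; ring
  have h3 : Real.exp (Real.log L * (-(4*k))) = (L : ℝ) ^ (-(4*k)) :=
    (Real.rpow_def_of_pos hLpos _).symm
  calc epsL L k c ≤ Real.exp A / Real.exp t := h1
    _ = Real.exp (2 * (c * Real.log L / L)) * (L : ℝ) ^ (-(4*k)) := by rw [h2, h3]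
    _ ≤ Real.exp 1 * (L : ℝ) ^ (-(4*k)) :=
        mul_le_mul_of_nonneg_right (Real.exp_le_exp.mpr hq) (Real.rpow_nonneg hLpos.le _)

/-- In the low temperature regime with parameters `k, c > 0`, there is a
constant `C₃ > 0` such that for every `0 < a < 8k − 4` there is `L₀` with: for all
`L ≥ L₀` and any family `(U_x(n))_{x∈Λ,n≥1}` of i.i.d. uniform random variables on
`(0,1)`, the probability that at some time `n ≤ L^{8k−4−a}` at least two distinct sites
simultaneously have atypical uniform numbers (i.e. that `T ≤ L^{8k−4−a}`) is at most
`C₃ L^{−a}`. -/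
theorem stmt16 (k c : ℝ) (hk : 0 < k) (hc : 0 < c) :
    ∃ C₃ > (0:ℝ), ∀ a : ℝ, 0 < a → a < 8 * k - 4 → ∃ L₀ : ℕ, ∀ L : ℕ, L₀ ≤ L → 2 ≤ L →
      ∀ (Ω : Type) (_ : MeasurableSpace Ω) (μ : Measure Ω)
        (_ : IsProbabilityMeasure μ) (U : Site L × ℕ → Ω → ℝ),
        (∀ i, Measurable (U i)) →
        iIndepFun U μ →
        (∀ i, μ.map (U i) = volume.restrict (Set.Ioo (0:ℝ) 1)) →
        μ {ω | ∃ n : ℕ, 1 ≤ n ∧ (n : ℝ) ≤ (L : ℝ) ^ (8 * k - 4 - a) ∧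
            ∃ x y : Site L, x ≠ y ∧
              ¬ typical L k c (U (x, n) ω) ∧ ¬ typical L k c (U (y, n) ω)}
          ≤ ENNReal.ofReal (C₃ * (L : ℝ) ^ (-a)) := by
  refine ⟨4 * Real.exp 2, by positivity, ?_⟩
  intro a ha ha'
  -- choose L₀ so that 2 c log L / L ≤ 1 for L ≥ L₀
  have hev : ∀ᶠ (L : ℕ) in atTop, 2 * (c * Real.log L / L) ≤ 1 := by
    have h0 : Tendsto (fun x : ℝ => Real.log x / x) atTop (nhds 0) :=
      Real.isLittleO_log_id_atTop.tendsto_div_nhds_zero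
    have h1 : Tendsto (fun L : ℕ => 2 * (c * (Real.log L / L))) atTop
        (nhds (2 * (c * 0))) :=
      ((h0.comp tendsto_natCast_atTop_atTop).const_mul c).const_mul 2
    have h2 := h1.eventually_lt_const (by norm_num : 2 * (c * (0:ℝ)) < 1)
    filter_upwards [h2] with L hL
    have : 2 * (c * Real.log L / L) = 2 * (c * (Real.log L / L)) := by ring
    rw [this]; exact hL.le
  obtain ⟨L₀, hL₀⟩ := eventually_atTop.mp hev
  refine ⟨L₀, ?_⟩
  intro L hLL hL2 Ω mΩ μ hμ U hU hind hmap
  haveI : NeZero L := ⟨by omega⟩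
  have hLpos : (0:ℝ) < L := by
    have : (2:ℝ) ≤ L := by exact_mod_cast hL2
    linarith
  set ε := epsL L k c with hεdef
  have hεpos : 0 < ε := epsL_pos L k c hL2
  have hεle : ε ≤ Real.exp 1 * (L : ℝ) ^ (-(4*k)) := epsL_le L k c hL2 (hL₀ L hLL)
  set S : Set ℝ := (Set.Ioo ε (1 - ε))ᶜ with hSdef
  have hSm : MeasurableSet S := measurableSet_Ioo.compl
  -- marginal bound
  have hmarg : ∀ i, μ (U i ⁻¹' S) ≤ ENNReal.ofReal (2 * ε) := by
    intro i
    have hmeq : μ (U i ⁻¹' S) = (μ.map (U i)) S := (Measure.map_apply (hU i) hSm).symm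
    rw [hmeq, hmap i, Measure.restrict_apply hSm]
    have hsub : S ∩ Set.Ioo 0 1 ⊆ Set.Ioc 0 ε ∪ Set.Ico (1 - ε) 1 := by
      rintro u ⟨hu1, hu2⟩
      rcases le_or_gt u ε with h | h
      · exact Or.inl ⟨hu2.1, h⟩
      · refine Or.inr ⟨?_, hu2.2⟩
        by_contra hcon
        exact hu1 ⟨h, lt_of_not_ge hcon⟩
    calc volume (S ∩ Set.Ioo 0 1)
        ≤ volume (Set.Ioc 0 ε ∪ Set.Ico (1 - ε) 1) := measure_mono hsub
      _ ≤ volume (Set.Ioc 0 ε) + volume (Set.Ico (1 - ε) 1) := measure_union_le _ _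
      _ = ENNReal.ofReal (ε - 0) + ENNReal.ofReal (1 - (1 - ε)) := by
          rw [Real.volume_Ioc, Real.volume_Ico]
      _ = ENNReal.ofReal (2 * ε) := by
          rw [← ENNReal.ofReal_add (by linarith) (by linarith)]
          congr 1; ring
  -- pair bound
  have hpair : ∀ (n : ℕ) (x y : Site L), x ≠ y →
      μ (U (x, n) ⁻¹' S ∩ U (y, n) ⁻¹' S)
        ≤ ENNReal.ofReal (2 * ε) * ENNReal.ofReal (2 * ε) := by
    intro n x y hxy
    have hind2 : IndepFun (U (x, n)) (U (y, n)) μ :=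
      hind.indepFun (by simp [hxy])
    rw [hind2.measure_inter_preimage_eq_mul S S hSm hSm]
    exact mul_le_mul' (hmarg _) (hmarg _)
  set N : ℝ := (L : ℝ) ^ (8 * k - 4 - a) with hNdef
  set M : ℕ := ⌊N⌋₊ with hMdef
  set t : Finset (ℕ × Site L × Site L) :=
    ((Finset.Icc 1 M) ×ˢ ((Finset.univ : Finset (Site L)) ×ˢ Finset.univ)).filter
      (fun p => p.2.1 ≠ p.2.2) with htdef
  have hsubset : {ω | ∃ n : ℕ, 1 ≤ n ∧ (n : ℝ) ≤ (L : ℝ) ^ (8 * k - 4 - a) ∧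
      ∃ x y : Site L, x ≠ y ∧
        ¬ typical L k c (U (x, n) ω) ∧ ¬ typical L k c (U (y, n) ω)}
      ⊆ ⋃ p ∈ t, (U (p.2.1, p.1) ⁻¹' S ∩ U (p.2.2, p.1) ⁻¹' S) := by
    rintro ω ⟨n, hn1, hnN, x, y, hxy, hx, hy⟩
    have hnM : n ≤ M := Nat.le_floor hnN
    have hmem : (n, x, y) ∈ t := by
      simp only [htdef, Finset.mem_filter, Finset.mem_product, Finset.mem_Icc,
        Finset.mem_univ, and_true, true_and]
      exact ⟨⟨hn1, hnM⟩, hxy⟩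
    exact Set.mem_biUnion hmem ⟨hx, hy⟩
  have hcard : t.card ≤ M * (L ^ 2 * L ^ 2) := by
    calc t.card
        ≤ ((Finset.Icc 1 M) ×ˢ ((Finset.univ : Finset (Site L)) ×ˢ Finset.univ)).card :=
          Finset.card_filter_le _ _
      _ = M * (L ^ 2 * L ^ 2) := by
          rw [Finset.card_product, Finset.card_product, Nat.card_Icc,
            Nat.add_sub_cancel, Finset.card_univ, Fintype.card_prod, ZMod.card]
          ring
  -- real-number bound
  have key : (t.card : ℝ) * (2 * ε * (2 * ε)) ≤ 4 * Real.exp 2 * (L : ℝ) ^ (-a) := by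
    have hMN : (M : ℝ) ≤ N := Nat.floor_le (Real.rpow_nonneg hLpos.le _)
    have h1 : (t.card : ℝ) ≤ N * (L : ℝ) ^ ((4:ℝ)) := by
      have hc1 : (t.card : ℝ) ≤ (M : ℝ) * ((L:ℝ) ^ 2 * (L:ℝ) ^ 2) := by
        exact_mod_cast Nat.cast_le.mpr hcard
      have hc2 : (L:ℝ) ^ 2 * (L:ℝ) ^ 2 = (L : ℝ) ^ ((4:ℝ)) := by
        rw [show (4:ℝ) = ((4:ℕ):ℝ) by norm_num, Real.rpow_natCast]
        ring
      calc (t.card : ℝ) ≤ (M : ℝ) * ((L:ℝ) ^ 2 * (L:ℝ) ^ 2) := hc1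
        _ ≤ N * ((L:ℝ) ^ 2 * (L:ℝ) ^ 2) := by
            apply mul_le_mul_of_nonneg_right hMN (by positivity)
        _ = N * (L : ℝ) ^ ((4:ℝ)) := by rw [hc2]
    have h2 : 2 * ε ≤ 2 * (Real.exp 1 * (L : ℝ) ^ (-(4*k))) := by linarith
    have hrpow : N * (L : ℝ) ^ ((4:ℝ)) * ((L : ℝ) ^ (-(4*k)) * (L : ℝ) ^ (-(4*k)))
        = (L : ℝ) ^ (-a) := by
      rw [hNdef, ← Real.rpow_add hLpos, ← Real.rpow_add hLpos, ← Real.rpow_add hLpos]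
      congr 1; ring
    have hexp2 : Real.exp 1 * Real.exp 1 = Real.exp 2 := by
      rw [← Real.exp_add]; norm_num
    calc (t.card : ℝ) * (2 * ε * (2 * ε))
        ≤ (N * (L : ℝ) ^ ((4:ℝ))) *
            ((2 * (Real.exp 1 * (L : ℝ) ^ (-(4*k)))) *
              (2 * (Real.exp 1 * (L : ℝ) ^ (-(4*k))))) := by
          apply mul_le_mul h1 (mul_le_mul h2 h2 (by positivity) (by positivity))
            (by positivity) (by positivity)
      _ = 4 * Real.exp 2 *
            (N * (L : ℝ) ^ ((4:ℝ)) * ((L : ℝ) ^ (-(4*k)) * (L : ℝ) ^ (-(4*k)))) := by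
          rw [← hexp2]; ring
      _ = 4 * Real.exp 2 * (L : ℝ) ^ (-a) := by rw [hrpow]
  -- put everything together
  calc μ {ω | ∃ n : ℕ, 1 ≤ n ∧ (n : ℝ) ≤ (L : ℝ) ^ (8 * k - 4 - a) ∧
        ∃ x y : Site L, x ≠ y ∧
          ¬ typical L k c (U (x, n) ω) ∧ ¬ typical L k c (U (y, n) ω)}
      ≤ μ (⋃ p ∈ t, (U (p.2.1, p.1) ⁻¹' S ∩ U (p.2.2, p.1) ⁻¹' S)) :=
        measure_mono hsubset
    _ ≤ ∑ p ∈ t, μ (U (p.2.1, p.1) ⁻¹' S ∩ U (p.2.2, p.1) ⁻¹' S) :=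
        measure_biUnion_finset_le t _
    _ ≤ ∑ _p ∈ t, ENNReal.ofReal (2 * ε) * ENNReal.ofReal (2 * ε) := by
        apply Finset.sum_le_sum
        intro p hp
        have hne : p.2.1 ≠ p.2.2 := (Finset.mem_filter.mp hp).2
        exact hpair p.1 p.2.1 p.2.2 hne
    _ = (t.card : ENNReal) * (ENNReal.ofReal (2 * ε) * ENNReal.ofReal (2 * ε)) := by
        rw [Finset.sum_const, nsmul_eq_mul]
    _ = ENNReal.ofReal ((t.card : ℝ) * (2 * ε * (2 * ε))) := by
        rw [← ENNReal.ofReal_mul (by positivity : (0:ℝ) ≤ 2 * ε),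
          ← ENNReal.ofReal_natCast t.card,
          ← ENNReal.ofReal_mul (by positivity : (0:ℝ) ≤ (t.card : ℝ))]
    _ ≤ ENNReal.ofReal (4 * Real.exp 2 * (L : ℝ) ^ (-a)) :=
        ENNReal.ofReal_le_ofReal key
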